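/- arXiv:1312.2398 — 2 statements merged into one kernel-verified Lean document; each statement's English description precedes it below -/
import Mathlib

section
/- Let ν be a Borel measure on ℝ with ν({0}) = 0, ∫_ℝ min(1, y²) ν(dy) < ∞, and ∫_{|y|≥1} log|y| ν(dy) < ∞ (logarithmic moment condition). Then for every λ > 0 and every real numbers β and h, the nonnegative function u ↦ ∫_ℝ (1 − cos(exp(−λ u)·β·h·y)) ν(dy) is integrable on [0, ∞), i.e. ∫_0^∞ ψ_ℝ(exp(−λ u)·β·h) du < ∞, where ψ_ℝ(h) := ∫_ℝ (1 − cos(h y)) ν(dy). -/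
open MeasureTheory Real Set Filter Topology


lemma aux_one_sub_cos_nonneg (t : ℝ) : 0 ≤ 1 - Real.cos t := by
  nlinarith [Real.cos_le_one t]

lemma aux_one_sub_cos_le (t : ℝ) : 1 - Real.cos t ≤ 4 * (t ^ 2 / (1 + t ^ 2)) := by
  have h1 : 1 - Real.cos t ≤ t ^ 2 / 2 := by
    have := Real.one_sub_sq_div_two_le_cos (x := t); linarith
  have h2 : 1 - Real.cos t ≤ 2 := by nlinarith [Real.neg_one_le_cos t]
  have ht : (0:ℝ) ≤ t ^ 2 := sq_nonneg t
  have hd : (0:ℝ) < 1 + t ^ 2 := by linarith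
  have he : 4 * (t ^ 2 / (1 + t ^ 2)) = 4 * t ^ 2 / (1 + t ^ 2) := by ring
  rcases le_total (t ^ 2) 1 with h | h
  · have : t ^ 2 / 2 ≤ 4 * t ^ 2 / (1 + t ^ 2) := by
      rw [div_le_div_iff₀ (by norm_num) hd]; nlinarith
    linarith [he ▸ this]
  · have : (2:ℝ) ≤ 4 * t ^ 2 / (1 + t ^ 2) := by
      rw [le_div_iff₀ hd]; nlinarith
    linarith [he ▸ this]

lemma aux_min_bound {a b : ℝ} (y : ℝ) (hab : a ^ 2 ≤ b) :
    min 1 ((a * y) ^ 2) ≤ max 1 b * min 1 (y ^ 2) := by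
  have hy : (0:ℝ) ≤ y ^ 2 := sq_nonneg y
  rcases le_total (y ^ 2) 1 with h | h
  · rw [min_eq_right h]
    calc min 1 ((a*y)^2) ≤ (a*y)^2 := min_le_right _ _
      _ = a^2 * y^2 := by ring
      _ ≤ b * y^2 := by nlinarith
      _ ≤ max 1 b * y^2 := by nlinarith [le_max_right (1:ℝ) b]
  · rw [min_eq_left h, mul_one]
    exact le_trans (min_le_left _ _) (le_max_left _ _)

lemma aux_log_bound (c y : ℝ) :
    Real.log (1 + (c * y) ^ 2) ≤ max (c ^ 2) (Real.log (1 + c ^ 2)) * min 1 (y ^ 2)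
      + Set.indicator {y : ℝ | 1 ≤ |y|} (fun y => 2 * Real.log |y|) y := by
  set C := max (c ^ 2) (Real.log (1 + c ^ 2)) with hC
  have hy : (0:ℝ) ≤ y ^ 2 := sq_nonneg y
  have hc : (0:ℝ) ≤ c ^ 2 := sq_nonneg c
  rcases le_or_gt 1 (|y|) with h | h
  · rw [Set.indicator_of_mem (by exact h)]
    have hy1 : (1:ℝ) ≤ y ^ 2 := by nlinarith [abs_nonneg y, sq_abs y]
    rw [min_eq_left hy1, mul_one]
    have h1 : 1 + (c*y)^2 ≤ (1 + c^2) * y^2 := by nlinarith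
    have h2 : Real.log (1 + (c*y)^2) ≤ Real.log ((1 + c^2) * y^2) :=
      Real.log_le_log (by positivity) h1
    have h3 : Real.log ((1 + c^2) * y^2) = Real.log (1 + c^2) + 2 * Real.log |y| := by
      rw [Real.log_mul (by positivity) (by positivity), ← sq_abs y, Real.log_pow]
      push_cast; ring
    have h4 : Real.log (1 + c^2) ≤ C := le_max_right _ _
    linarith
  · rw [Set.indicator_of_notMem (by simpa using h), add_zero]
    have hy1 : y ^ 2 ≤ 1 := by nlinarith [abs_nonneg y, sq_abs y]
    rw [min_eq_right hy1]
    have h1 : Real.log (1 + (c*y)^2) ≤ (c*y)^2 := by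
      have := Real.log_le_sub_one_of_pos (x := 1 + (c*y)^2) (by positivity)
      linarith
    have h2 : (c*y)^2 = c^2 * y^2 := by ring
    have h3 : c^2 ≤ C := le_max_left _ _
    nlinarith



lemma aux_inner_integral {lam : ℝ} (hlam : 0 < lam) {K : ℝ} (hK : 0 ≤ K) :
    ∫⁻ u in Set.Ici (0:ℝ),
        ENNReal.ofReal (K * Real.exp (-(2*lam)*u) / (1 + K * Real.exp (-(2*lam)*u)))
      = ENNReal.ofReal (Real.log (1 + K) / (2*lam)) := by
  set b := 2 * lam with hbdef
  have hb : 0 < b := by positivity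
  set f' : ℝ → ℝ := fun u => K * Real.exp (-b*u) / (1 + K * Real.exp (-b*u)) with hf'
  set F : ℝ → ℝ := fun u => -(Real.log (1 + K * Real.exp (-b*u)) / b) with hF
  have hdenom : ∀ u : ℝ, 0 < 1 + K * Real.exp (-b*u) := fun u => by positivity
  have hderiv : ∀ u ∈ Set.Ici (0:ℝ), HasDerivAt F (f' u) u := by
    intro u _
    have h1 : HasDerivAt (fun v : ℝ => -b * v) (-b) u := by
      simpa using (hasDerivAt_id u).const_mul (-b)
    have h2 : HasDerivAt (fun v : ℝ => 1 + K * Real.exp (-b*v))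
        (K * (Real.exp (-b*u) * (-b))) u := ((h1.exp).const_mul K).const_add 1
    have h3 : HasDerivAt F (-(K * (Real.exp (-b*u) * (-b)) / (1 + K * Real.exp (-b*u)) / b)) u :=
      ((h2.log (ne_of_gt (hdenom u))).div_const b).neg
    convert h3 using 1
    rw [hf']
    field_simp
  have hf'nonneg : ∀ u : ℝ, 0 ≤ f' u := fun u => by
    apply div_nonneg (by positivity) (le_of_lt (hdenom u))
  have hf'cont : Continuous f' := by
    apply Continuous.div
    · fun_prop
    · fun_prop
    · exact fun u => ne_of_gt (hdenom u)
  have f'int : IntegrableOn f' (Set.Ioi (0:ℝ)) := by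
    apply Integrable.mono' ((exp_neg_integrableOn_Ioi 0 hb).const_mul K)
      hf'cont.aestronglyMeasurable.restrict
    filter_upwards with u
    rw [Real.norm_of_nonneg (hf'nonneg u)]
    rw [hf', div_le_iff₀ (hdenom u)]
    nlinarith [Real.exp_pos (-b*u), hK, sq_nonneg (K * Real.exp (-b*u)), mul_nonneg hK (Real.exp_pos (-b*u)).le]
  have hexp : Tendsto (fun u : ℝ => Real.exp (-b*u)) atTop (𝓝 0) := by
    have h1 : Tendsto (fun u : ℝ => b * u) atTop atTop :=
      Tendsto.const_mul_atTop hb tendsto_id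
    have h2 : Tendsto (fun u : ℝ => -(b * u)) atTop atBot := tendsto_neg_atTop_atBot.comp h1
    have h3 := Real.tendsto_exp_atBot.comp h2
    exact h3.congr (fun u => by simp [Function.comp, neg_mul])
  have hFcont : ContinuousAt (fun x : ℝ => -(Real.log (1 + K * x) / b)) 0 := by
    have h0 : (1:ℝ) + K * 0 ≠ 0 := by norm_num
    exact (((continuousAt_const.add (continuousAt_const.mul continuousAt_id)).log
      h0).div_const b).neg
  have htend : Tendsto F atTop (𝓝 0) := by
    have := hFcont.tendsto.comp hexp
    simpa [hF, Function.comp_def] using this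
  have hint := integral_Ioi_of_hasDerivAt_of_tendsto' hderiv f'int htend
  have hF0 : F 0 = -(Real.log (1 + K) / b) := by simp [hF]
  rw [hF0] at hint
  have hval : ∫ u in Set.Ioi (0:ℝ), f' u = Real.log (1 + K) / b := by
    rw [hint]; ring
  have hofReal := ofReal_integral_eq_lintegral_ofReal f'int
    (Filter.Eventually.of_forall fun u => hf'nonneg u)
  rw [hval] at hofReal
  rw [show (volume : Measure ℝ).restrict (Set.Ici (0:ℝ))
      = (volume : Measure ℝ).restrict (Set.Ioi (0:ℝ)) from
    (Measure.restrict_congr_set Ioi_ae_eq_Ici).symm]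
  exact hofReal.symm



lemma aux_sigmaFinite (ν : Measure ℝ) (hν0 : ν {0} = 0)
    (hν : ∫⁻ y, ENNReal.ofReal (min 1 (y ^ 2)) ∂ν < ⊤) : SigmaFinite ν := by
  have key : ∀ ε : ℝ, 0 < ε → ν {y : ℝ | ε ≤ |y|} < ⊤ := by
    intro ε hε
    set δ := ENNReal.ofReal (min 1 (ε ^ 2)) with hδ
    have hδ0 : δ ≠ 0 := by
      simp only [hδ, ne_eq, ENNReal.ofReal_eq_zero, not_le]
      exact lt_min one_pos (by positivity)
    have hsub : {y : ℝ | ε ≤ |y|} ⊆ {y : ℝ | δ ≤ ENNReal.ofReal (min 1 (y ^ 2))} := by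
      intro y hy
      simp only [Set.mem_setOf_eq] at hy ⊢
      apply ENNReal.ofReal_le_ofReal
      have : ε ^ 2 ≤ y ^ 2 := by
        have := abs_nonneg y
        nlinarith [sq_abs y]
      exact min_le_min le_rfl this
    have hmeas : AEMeasurable (fun y : ℝ => ENNReal.ofReal (min 1 (y ^ 2))) ν :=
      ((continuous_const.min (continuous_pow 2)).measurable).ennreal_ofReal.aemeasurable
    calc ν {y : ℝ | ε ≤ |y|} ≤ ν {y : ℝ | δ ≤ ENNReal.ofReal (min 1 (y ^ 2))} :=
          measure_mono hsub
      _ ≤ (∫⁻ y, ENNReal.ofReal (min 1 (y ^ 2)) ∂ν) / δ :=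
          meas_ge_le_lintegral_div hmeas hδ0 ENNReal.ofReal_ne_top
      _ < ⊤ := ENNReal.div_lt_top hν.ne hδ0
  refine ⟨⟨⟨fun n => {y : ℝ | 1 / (n + 1) ≤ |y|} ∪ {0}, fun _ => trivial, ?_, ?_⟩⟩⟩
  · intro n
    calc ν ({y : ℝ | 1 / (n + 1) ≤ |y|} ∪ {0})
        ≤ ν {y : ℝ | 1 / (n + 1) ≤ |y|} + ν {0} := measure_union_le _ _
      _ < ⊤ := by
          rw [hν0, add_zero]
          exact key _ (by positivity)
  · ext y
    simp only [Set.mem_iUnion, Set.mem_union, Set.mem_setOf_eq, Set.mem_singleton_iff,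
      Set.mem_univ, iff_true]
    rcases eq_or_ne y 0 with rfl | hy
    · exact ⟨0, Or.inr rfl⟩
    · have hay : 0 < |y| := abs_pos.mpr hy
      obtain ⟨n, hn⟩ := exists_nat_gt (1 / |y|)
      refine ⟨n, Or.inl ?_⟩
      rw [div_le_iff₀ (by positivity)]
      rw [div_lt_iff₀ hay] at hn
      nlinarith


lemma aux_one_sub_cos_le_min (t : ℝ) : 1 - Real.cos t ≤ 2 * min 1 (t ^ 2) := by
  rcases le_total 1 (t ^ 2) with h | h
  · rw [min_eq_left h]; nlinarith [Real.neg_one_le_cos t]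
  · rw [min_eq_right h]
    have := Real.one_sub_sq_div_two_le_cos (x := t); nlinarith

theorem levy_exponent_time_integrable_of_log_moment
    (ν : Measure ℝ) (hν0 : ν {0} = 0)
    (hν : ∫⁻ y, ENNReal.ofReal (min 1 (y ^ 2)) ∂ν < ⊤)
    (hlog : ∫⁻ y in {y : ℝ | 1 ≤ |y|}, ENNReal.ofReal (Real.log |y|) ∂ν < ⊤) :
    ∀ lam : ℝ, 0 < lam → ∀ β h : ℝ,
      IntegrableOn
        (fun u : ℝ => ∫ y, (1 - Real.cos (Real.exp (-lam * u) * β * h * y)) ∂ν)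
        (Set.Ici (0 : ℝ)) := by
  intro lam hlam β h
  haveI : SigmaFinite ν := aux_sigmaFinite ν hν0 hν
  set c := β * h with hc
  set f : ℝ → ℝ → ℝ := fun u y => 1 - Real.cos ((Real.exp (-lam*u) * c) * y) with hf
  have hrw : (fun u : ℝ => ∫ y, (1 - Real.cos (Real.exp (-lam*u) * β * h * y)) ∂ν)
      = fun u => ∫ y, f u y ∂ν := by
    funext u
    apply integral_congr_ae
    filter_upwards with y
    rw [hf, hc]
    ring_nf
  rw [hrw]
  have hfnonneg : ∀ u y : ℝ, 0 ≤ f u y := fun u y => aux_one_sub_cos_nonneg _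
  have hfcont : ∀ u : ℝ, Continuous (f u) := fun u => by rw [hf]; fun_prop
  -- integrability of min 1 y^2
  have hmin_int : Integrable (fun y : ℝ => min 1 (y ^ 2)) ν := by
    refine ⟨(continuous_const.min (continuous_pow 2)).aestronglyMeasurable, ?_⟩
    rw [hasFiniteIntegral_iff_ofReal
      (Filter.Eventually.of_forall fun y => le_min zero_le_one (sq_nonneg y))]
    exact hν
  -- integrability of f u for each u
  have hfint : ∀ u : ℝ, Integrable (f u) ν := by
    intro u
    refine Integrable.mono'
      (hmin_int.const_mul (2 * max 1 ((Real.exp (-lam*u) * c) ^ 2)))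
      ((hfcont u).aestronglyMeasurable) ?_
    filter_upwards with y
    rw [Real.norm_of_nonneg (hfnonneg u y)]
    have h1 := aux_one_sub_cos_le_min ((Real.exp (-lam*u) * c) * y)
    have h2 := aux_min_bound (a := Real.exp (-lam*u) * c)
      (b := (Real.exp (-lam*u) * c) ^ 2) y le_rfl
    calc f u y ≤ 2 * min 1 (((Real.exp (-lam*u) * c) * y) ^ 2) := h1
      _ ≤ 2 * (max 1 ((Real.exp (-lam*u) * c) ^ 2) * min 1 (y ^ 2)) := by linarith
      _ = 2 * max 1 ((Real.exp (-lam*u) * c) ^ 2) * min 1 (y ^ 2) := by ring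
  -- continuity of the integral in u
  have hgcont : Continuous (fun u => ∫ y, f u y ∂ν) := by
    rw [continuous_iff_continuousAt]
    intro u₀
    set A := Real.exp (-lam*(u₀-1)) * c with hA
    apply continuousAt_of_dominated
      (bound := fun y : ℝ => 2 * max 1 (A ^ 2) * min 1 (y ^ 2))
    · exact Filter.Eventually.of_forall fun u => (hfcont u).aestronglyMeasurable
    · filter_upwards [Ioi_mem_nhds (by linarith : u₀ - 1 < u₀)] with u hu
      filter_upwards with y
      rw [Real.norm_of_nonneg (hfnonneg u y)]
      have hle : (Real.exp (-lam*u) * c) ^ 2 ≤ A ^ 2 := by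
        have he : Real.exp (-lam*u) ≤ Real.exp (-lam*(u₀-1)) := by
          apply Real.exp_le_exp.mpr
          have : u₀ - 1 ≤ u := le_of_lt hu
          nlinarith
        have hep := Real.exp_pos (-lam*u)
        rw [hA]
        nlinarith [sq_nonneg c, mul_nonneg (mul_nonneg (sub_nonneg.mpr he)
          (by positivity : (0:ℝ) ≤ Real.exp (-lam*(u₀-1)) + Real.exp (-lam*u))) (sq_nonneg c)]
      have h1 := aux_one_sub_cos_le_min ((Real.exp (-lam*u) * c) * y)
      have h2 := aux_min_bound (a := Real.exp (-lam*u) * c) (b := A ^ 2) y hle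
      calc f u y ≤ 2 * min 1 (((Real.exp (-lam*u) * c) * y) ^ 2) := h1
        _ ≤ 2 * (max 1 (A ^ 2) * min 1 (y ^ 2)) := by linarith
        _ = 2 * max 1 (A ^ 2) * min 1 (y ^ 2) := by ring
    · exact hmin_int.const_mul _
    · exact Filter.Eventually.of_forall fun y => (by rw [hf]; fun_prop :
        Continuous fun u => f u y).continuousAt
  constructor
  · exact hgcont.aestronglyMeasurable.restrict
  · rw [hasFiniteIntegral_iff_ofReal (Filter.Eventually.of_forall fun u =>
      integral_nonneg (fun y => hfnonneg u y))]
    -- step 1: ofReal of integral = lintegral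
    have step1 : ∀ u : ℝ, ENNReal.ofReal (∫ y, f u y ∂ν)
        = ∫⁻ y, ENNReal.ofReal (f u y) ∂ν := fun u =>
      ofReal_integral_eq_lintegral_ofReal (hfint u)
        (Filter.Eventually.of_forall (hfnonneg u))
    set G : ℝ → ℝ → ENNReal := fun u y => ENNReal.ofReal
      (4 * ((c*y)^2 * Real.exp (-(2*lam)*u) / (1 + (c*y)^2 * Real.exp (-(2*lam)*u)))) with hG
    have hexp_sq : ∀ u : ℝ, Real.exp (-lam*u) ^ 2 = Real.exp (-(2*lam)*u) := by
      intro u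
      rw [sq, ← Real.exp_add]
      ring_nf
    -- step 2: pointwise domination
    have step2 : ∀ u y : ℝ, ENNReal.ofReal (f u y) ≤ G u y := by
      intro u y
      apply ENNReal.ofReal_le_ofReal
      have h1 := aux_one_sub_cos_le ((Real.exp (-lam*u) * c) * y)
      have ht : ((Real.exp (-lam*u) * c) * y) ^ 2
          = (c*y)^2 * Real.exp (-(2*lam)*u) := by
        rw [← hexp_sq u]; ring
      rw [hf]
      rw [← ht]
      exact h1
    -- measurability of G on product
    have hGmeas : AEMeasurable (Function.uncurry G)
        (((volume : Measure ℝ).restrict (Set.Ici (0:ℝ))).prod ν) := by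
      have hcG : Continuous (fun p : ℝ × ℝ =>
          4 * ((c*p.2)^2 * Real.exp (-(2*lam)*p.1) / (1 + (c*p.2)^2 * Real.exp (-(2*lam)*p.1)))) := by
        apply continuous_const.mul
        apply Continuous.div (by fun_prop) (by fun_prop)
        intro p
        positivity
      exact (hcG.measurable.ennreal_ofReal).aemeasurable
    -- inner integral value
    have hinner : ∀ y : ℝ, ∫⁻ u in Set.Ici (0:ℝ), G u y
        = ENNReal.ofReal 4 * ENNReal.ofReal (Real.log (1 + (c*y)^2) / (2*lam)) := by
      intro y
      have : ∀ u : ℝ, G u y = ENNReal.ofReal 4 * ENNReal.ofReal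
          ((c*y)^2 * Real.exp (-(2*lam)*u) / (1 + (c*y)^2 * Real.exp (-(2*lam)*u))) := by
        intro u
        rw [hG, ← ENNReal.ofReal_mul (by norm_num)]
      rw [lintegral_congr this, lintegral_const_mul' _ _ ENNReal.ofReal_ne_top,
        aux_inner_integral hlam (sq_nonneg (c*y))]
    calc ∫⁻ u in Set.Ici (0:ℝ), ENNReal.ofReal (∫ y, f u y ∂ν)
        = ∫⁻ u in Set.Ici (0:ℝ), ∫⁻ y, ENNReal.ofReal (f u y) ∂ν :=
          lintegral_congr step1
      _ ≤ ∫⁻ u in Set.Ici (0:ℝ), ∫⁻ y, G u y ∂ν :=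
          lintegral_mono fun u => lintegral_mono fun y => step2 u y
      _ = ∫⁻ y, (∫⁻ u in Set.Ici (0:ℝ), G u y) ∂ν := lintegral_lintegral_swap hGmeas
      _ = ∫⁻ y, ENNReal.ofReal 4 * ENNReal.ofReal (Real.log (1 + (c*y)^2) / (2*lam)) ∂ν :=
          lintegral_congr hinner
      _ = ENNReal.ofReal 4 * ∫⁻ y, ENNReal.ofReal (Real.log (1 + (c*y)^2) / (2*lam)) ∂ν :=
          lintegral_const_mul' _ _ ENNReal.ofReal_ne_top
      _ < ⊤ := by
          apply ENNReal.mul_lt_top ENNReal.ofReal_lt_top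
          -- remains: ∫⁻ y, ofReal (log (1+(c*y)^2) / (2*lam)) ∂ν < ⊤
          have hdiv : ∀ y : ℝ, ENNReal.ofReal (Real.log (1 + (c*y)^2) / (2*lam))
              = ENNReal.ofReal (Real.log (1 + (c*y)^2)) / ENNReal.ofReal (2*lam) := fun y =>
            ENNReal.ofReal_div_of_pos (by positivity)
          rw [lintegral_congr hdiv]
          rw [show (fun y : ℝ => ENNReal.ofReal (Real.log (1 + (c*y)^2)) / ENNReal.ofReal (2*lam))
            = fun y : ℝ => ENNReal.ofReal (Real.log (1 + (c*y)^2)) * (ENNReal.ofReal (2*lam))⁻¹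
            from rfl]
          rw [lintegral_mul_const' _ _ (by
            simp only [ne_eq, ENNReal.inv_eq_top, ENNReal.ofReal_eq_zero, not_le]
            positivity)]
          apply ENNReal.mul_lt_top _ (ENNReal.inv_lt_top.mpr (by
            simp only [ENNReal.ofReal_pos]; positivity))
          -- key finiteness
          set C := max (c ^ 2) (Real.log (1 + c ^ 2)) with hC
          have hC0 : 0 ≤ C := le_trans (sq_nonneg c) (le_max_left _ _)
          have hsmeas : MeasurableSet {y : ℝ | 1 ≤ |y|} :=
            (isClosed_Ici.preimage continuous_abs).measurableSet
          calc ∫⁻ y, ENNReal.ofReal (Real.log (1 + (c*y)^2)) ∂ν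
              ≤ ∫⁻ y, (ENNReal.ofReal (C * min 1 (y^2))
                  + Set.indicator {y : ℝ | 1 ≤ |y|}
                      (fun y => ENNReal.ofReal (2 * Real.log |y|)) y) ∂ν := by
                apply lintegral_mono
                intro y
                have hb := aux_log_bound c y
                calc ENNReal.ofReal (Real.log (1 + (c*y)^2))
                    ≤ ENNReal.ofReal (C * min 1 (y^2)
                        + Set.indicator {y : ℝ | 1 ≤ |y|} (fun y => 2 * Real.log |y|) y) :=
                      ENNReal.ofReal_le_ofReal hb
                  _ ≤ ENNReal.ofReal (C * min 1 (y^2))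
                      + ENNReal.ofReal (Set.indicator {y : ℝ | 1 ≤ |y|}
                          (fun y => 2 * Real.log |y|) y) := ENNReal.ofReal_add_le
                  _ ≤ ENNReal.ofReal (C * min 1 (y^2))
                      + Set.indicator {y : ℝ | 1 ≤ |y|}
                          (fun y => ENNReal.ofReal (2 * Real.log |y|)) y := by
                      gcongr
                      by_cases hy : y ∈ {y : ℝ | 1 ≤ |y|}
                      · rw [Set.indicator_of_mem hy, Set.indicator_of_mem hy]
                      · rw [Set.indicator_of_notMem hy, Set.indicator_of_notMem hy]
                        simp
            _ = (∫⁻ y, ENNReal.ofReal (C * min 1 (y^2)) ∂ν)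
                + ∫⁻ y, Set.indicator {y : ℝ | 1 ≤ |y|}
                    (fun y => ENNReal.ofReal (2 * Real.log |y|)) y ∂ν :=
                lintegral_add_left
                  ((continuous_const.mul (continuous_const.min (continuous_pow 2))).measurable.ennreal_ofReal) _
            _ < ⊤ := by
                apply ENNReal.add_lt_top.mpr
                constructor
                · have : ∀ y : ℝ, ENNReal.ofReal (C * min 1 (y^2))
                      = ENNReal.ofReal C * ENNReal.ofReal (min 1 (y^2)) := fun y =>
                    ENNReal.ofReal_mul hC0
                  rw [lintegral_congr this, lintegral_const_mul' _ _ ENNReal.ofReal_ne_top]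
                  exact ENNReal.mul_lt_top ENNReal.ofReal_lt_top hν
                · rw [lintegral_indicator hsmeas]
                  have : ∀ y : ℝ, ENNReal.ofReal (2 * Real.log |y|)
                      = ENNReal.ofReal 2 * ENNReal.ofReal (Real.log |y|) := fun y =>
                    ENNReal.ofReal_mul (by norm_num)
                  rw [lintegral_congr this, lintegral_const_mul' _ _ ENNReal.ofReal_ne_top]
                  exact ENNReal.mul_lt_top ENNReal.ofReal_lt_top hlog
end

section
/- Let H be a real Banach space, ω > η ≥ 0, and let S : ℝ → (bounded linear operators on H) satisfy: ‖S(t)‖ ≤ exp(−ω t) for all t ≥ 0, and for each x ∈ H the map t ↦ S(t)x is continuous on [0, ∞). Let G : H → H be Lipschitz continuous with Lipschitz constant η, and let φ : ℝ → H be bounded and continuous. Then there exists exactly one bounded continuous function r : ℝ → H such that for every t ∈ ℝ, r(t) = ∫_{−∞}^{t} S(t−s)·G(r(s)) ds + φ(t), the (Bochner) integral being absolutely convergent. -/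
open MeasureTheory Set Filter

namespace StatMildAux

variable {H : Type*} [NormedAddCommGroup H] [NormedSpace ℝ H]

lemma expIntOn {b : ℝ} (hb : 0 < b) :
    IntegrableOn (fun u : ℝ => Real.exp (-b * u)) (Set.Ici (0:ℝ)) := by
  rw [integrableOn_Ici_iff_integrableOn_Ioi]
  exact exp_neg_integrableOn_Ioi 0 hb

lemma expIntVal {b : ℝ} (hb : 0 < b) :
    ∫ u in Set.Ici (0:ℝ), Real.exp (-b * u) = 1 / b := by
  rw [MeasureTheory.integral_Ici_eq_integral_Ioi]
  have hd : ∀ x ∈ Set.Ioi (0:ℝ),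
      HasDerivAt (fun x => -Real.exp (-b*x)/b) (Real.exp (-b*x)) x := by
    intro x _
    have h1 : HasDerivAt (fun x : ℝ => -b*x) (-b) x := by
      simpa using (hasDerivAt_id x).const_mul (-b)
    have h2 := (h1.exp.neg).div_const b
    refine h2.congr_deriv ?_
    rw [mul_neg, neg_neg, mul_div_assoc, div_self hb.ne', mul_one]
  have htend : Filter.Tendsto (fun x => -Real.exp (-b*x)/b) Filter.atTop (nhds 0) := by
    have h1 : Filter.Tendsto (fun x : ℝ => -b*x) Filter.atTop Filter.atBot := by
      have h0 := tendsto_neg_atTop_atBot.comp (Filter.Tendsto.const_mul_atTop hb Filter.tendsto_id)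
      refine Filter.Tendsto.congr (fun x => ?_) h0
      simp [Function.comp, neg_mul]
    have h2 := Real.tendsto_exp_atBot.comp h1
    have h3 := (h2.neg).div_const b
    simpa using h3
  have hcont : ContinuousWithinAt (fun x => -Real.exp (-b*x)/b) (Set.Ici 0) 0 :=
    (((Real.continuous_exp.comp (continuous_const.mul continuous_id)).neg.div_const b)).continuousWithinAt
  rw [integral_Ioi_of_hasDerivAt_of_tendsto hcont hd (exp_neg_integrableOn_Ioi 0 hb) htend]
  simp
  ring

lemma subst_pre (t : ℝ) : (fun u : ℝ => t - u) ⁻¹' (Set.Iic t) = Set.Ici (0:ℝ) := by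
  ext u; simp

lemma subst_integral (f : ℝ → H) (t : ℝ) :
    ∫ s in Set.Iic t, f s = ∫ u in Set.Ici (0:ℝ), f (t - u) := by
  have hmp : MeasurePreserving (fun u : ℝ => t - u) volume volume :=
    Measure.measurePreserving_sub_left volume t
  have hemb : MeasurableEmbedding (fun u : ℝ => t - u) := by
    simpa using (Homeomorph.subLeft t).measurableEmbedding
  rw [← hmp.setIntegral_preimage_emb hemb f (Set.Iic t), subst_pre]

lemma subst_integrableOn (f : ℝ → H) (t : ℝ) :
    IntegrableOn (fun u => f (t - u)) (Set.Ici (0:ℝ)) ↔ IntegrableOn f (Set.Iic t) := by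
  have hmp : MeasurePreserving (fun u : ℝ => t - u) volume volume :=
    Measure.measurePreserving_sub_left volume t
  have hemb : MeasurableEmbedding (fun u : ℝ => t - u) := by
    simpa using (Homeomorph.subLeft t).measurableEmbedding
  rw [← subst_pre t]
  exact hmp.integrableOn_comp_preimage hemb

lemma contOn_S (ω : ℝ) (S : ℝ → H →L[ℝ] H)
    (hS : ∀ t : ℝ, 0 ≤ t → ‖S t‖ ≤ Real.exp (-ω * t))
    (hScont : ∀ x : H, ContinuousOn (fun t : ℝ => S t x) (Set.Ici (0 : ℝ)))
    {ψ : ℝ → H} (hψ : Continuous ψ) :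
    ContinuousOn (fun u => S u (ψ u)) (Set.Ici (0:ℝ)) := by
  intro u₀ hu₀
  have heq : ∀ u : ℝ, S u (ψ u) = S u (ψ u - ψ u₀) + S u (ψ u₀) := by
    intro u; rw [map_sub]; abel
  have h2 : Filter.Tendsto (fun u => S u (ψ u₀)) (nhdsWithin u₀ (Set.Ici 0)) (nhds (S u₀ (ψ u₀))) :=
    hScont (ψ u₀) u₀ hu₀
  have h1 : Filter.Tendsto (fun u => S u (ψ u - ψ u₀)) (nhdsWithin u₀ (Set.Ici 0)) (nhds 0) := by
    have hb : ∀ᶠ u in nhdsWithin u₀ (Set.Ici 0),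
        ‖S u (ψ u - ψ u₀)‖ ≤ Real.exp (-ω * u) * ‖ψ u - ψ u₀‖ := by
      filter_upwards [self_mem_nhdsWithin] with u hu
      calc ‖S u (ψ u - ψ u₀)‖ ≤ ‖S u‖ * ‖ψ u - ψ u₀‖ := (S u).le_opNorm _
        _ ≤ Real.exp (-ω * u) * ‖ψ u - ψ u₀‖ :=
          mul_le_mul_of_nonneg_right (hS u hu) (norm_nonneg _)
    have hg : Filter.Tendsto (fun u => Real.exp (-ω * u) * ‖ψ u - ψ u₀‖)
        (nhdsWithin u₀ (Set.Ici 0)) (nhds 0) := by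
      have hc : Continuous fun u => Real.exp (-ω * u) * ‖ψ u - ψ u₀‖ := by continuity
      have := hc.tendsto u₀
      simp only [sub_self, norm_zero, mul_zero] at this
      exact this.mono_left nhdsWithin_le_nhds
    exact squeeze_zero_norm' hb hg
  have := h1.add h2
  rw [zero_add] at this
  exact Filter.Tendsto.congr (fun u => (heq u).symm) this

end StatMildAux

open StatMildAux BoundedContinuousFunction

theorem stationary_mild_solution_exists_unique
    {H : Type*} [NormedAddCommGroup H] [NormedSpace ℝ H] [CompleteSpace H]
    (ω η : ℝ) (hη : 0 ≤ η) (hωη : η < ω)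
    (S : ℝ → H →L[ℝ] H)
    (hS : ∀ t : ℝ, 0 ≤ t → ‖S t‖ ≤ Real.exp (-ω * t))
    (hScont : ∀ x : H, ContinuousOn (fun t : ℝ => S t x) (Set.Ici (0 : ℝ)))
    (G : H → H) (hG : LipschitzWith (Real.toNNReal η) G)
    (φ : ℝ → H) (hφc : Continuous φ) (hφb : ∃ M : ℝ, ∀ t : ℝ, ‖φ t‖ ≤ M) :
    ∃! r : ℝ → H,
      Continuous r ∧ (∃ M : ℝ, ∀ t : ℝ, ‖r t‖ ≤ M) ∧
      ∀ t : ℝ,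
        IntegrableOn (fun s : ℝ => S (t - s) (G (r s))) (Set.Iic t) ∧
        r t = (∫ s in Set.Iic t, S (t - s) (G (r s))) + φ t := by
  classical
  have hω : 0 < ω := hη.trans_lt hωη
  obtain ⟨M, hM⟩ := hφb
  set C₀ := ‖G 0‖ with hC₀def
  have hC₀ : 0 ≤ C₀ := norm_nonneg _
  have hGc : Continuous G := hG.continuous
  have hGlip : ∀ x y : H, ‖G x - G y‖ ≤ η * ‖x - y‖ := by
    intro x y
    have := hG.dist_le_mul x y
    rw [dist_eq_norm, dist_eq_norm] at this
    rwa [Real.coe_toNNReal η hη] at this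
  have hGnorm : ∀ x : H, ‖G x‖ ≤ η * ‖x‖ + C₀ := by
    intro x
    calc ‖G x‖ = ‖G x - G 0 + G 0‖ := by rw [sub_add_cancel]
      _ ≤ ‖G x - G 0‖ + ‖G 0‖ := norm_add_le _ _
      _ ≤ η * ‖x - 0‖ + C₀ := add_le_add (hGlip x 0) le_rfl
      _ = η * ‖x‖ + C₀ := by rw [sub_zero]
  -- integrability and value of exponential-type bounds on Iic t
  have hexpC : ∀ (c t : ℝ), IntegrableOn (fun s => Real.exp (-ω * (t - s)) * c) (Set.Iic t) := by
    intro c t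
    rw [← subst_integrableOn (fun s => Real.exp (-ω * (t - s)) * c) t]
    have := (expIntOn hω).mul_const c
    simp only [sub_sub_cancel]
    exact this
  have hexpCval : ∀ (c t : ℝ), (∫ s in Set.Iic t, Real.exp (-ω * (t - s)) * c) = c / ω := by
    intro c t
    rw [subst_integral (fun s => Real.exp (-ω * (t - s)) * c) t]
    simp only [sub_sub_cancel]
    rw [MeasureTheory.integral_mul_const, expIntVal hω]
    ring
  -- main package for any bounded continuous r
  have main : ∀ (r : ℝ → H), Continuous r → ∀ B : ℝ, (∀ s, ‖r s‖ ≤ B) →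
      (∀ t, IntegrableOn (fun s : ℝ => S (t - s) (G (r s))) (Set.Iic t)) ∧
      Continuous (fun t => ∫ s in Set.Iic t, S (t - s) (G (r s))) ∧
      (∀ t, ‖∫ s in Set.Iic t, S (t - s) (G (r s))‖ ≤ (η * B + C₀) / ω) := by
    intro r hrc B hrB
    have hB0 : 0 ≤ B := (norm_nonneg _).trans (hrB 0)
    have h1 : ∀ t, ContinuousOn (fun u => S u (G (r (t - u)))) (Set.Ici (0:ℝ)) := by
      intro t
      exact contOn_S ω S hS hScont (hGc.comp (hrc.comp (continuous_const.sub continuous_id)))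
    have h2 : ∀ t, ContinuousOn (fun s => S (t - s) (G (r s))) (Set.Iic t) := by
      intro t
      have hmap : Set.MapsTo (fun s : ℝ => t - s) (Set.Iic t) (Set.Ici (0:ℝ)) := by
        intro s hs; simp only [Set.mem_Iic] at hs; simp [hs]
      have := (h1 t).comp ((continuous_const.sub continuous_id).continuousOn) hmap
      simpa [Function.comp_def, sub_sub_cancel] using this
    have hbd : ∀ t, ∀ s ∈ Set.Iic t, ‖S (t - s) (G (r s))‖ ≤
        Real.exp (-ω * (t - s)) * (η * B + C₀) := by
      intro t s hs
      simp only [Set.mem_Iic] at hs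
      calc ‖S (t - s) (G (r s))‖ ≤ ‖S (t - s)‖ * ‖G (r s)‖ := (S (t-s)).le_opNorm _
        _ ≤ Real.exp (-ω * (t - s)) * (η * B + C₀) := by
            apply mul_le_mul (hS _ (by linarith)) _ (norm_nonneg _) (Real.exp_nonneg _)
            calc ‖G (r s)‖ ≤ η * ‖r s‖ + C₀ := hGnorm _
              _ ≤ η * B + C₀ := by nlinarith [hrB s]
    have hint : ∀ t, IntegrableOn (fun s : ℝ => S (t - s) (G (r s))) (Set.Iic t) := by
      intro t
      refine Integrable.mono' (hexpC (η * B + C₀) t)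
        ((h2 t).aestronglyMeasurable measurableSet_Iic) ?_
      rw [ae_restrict_iff' measurableSet_Iic]
      exact ae_of_all _ (hbd t)
    have hrepr : ∀ t, (∫ s in Set.Iic t, S (t - s) (G (r s)))
        = ∫ u in Set.Ici (0:ℝ), S u (G (r (t - u))) := by
      intro t
      have := subst_integral (fun s => S (t - s) (G (r s))) t
      simpa [sub_sub_cancel] using this
    refine ⟨hint, ?_, ?_⟩
    · have heq : (fun t => ∫ s in Set.Iic t, S (t - s) (G (r s)))
          = fun t => ∫ u in Set.Ici (0:ℝ), S u (G (r (t - u))) := funext hrepr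
      rw [heq, continuous_iff_continuousAt]
      intro t₀
      apply MeasureTheory.continuousAt_of_dominated
        (bound := fun u => Real.exp (-ω * u) * (η * B + C₀))
      · exact Filter.Eventually.of_forall fun t =>
          ((h1 t).aestronglyMeasurable measurableSet_Ici)
      · refine Filter.Eventually.of_forall fun t => ?_
        rw [ae_restrict_iff' measurableSet_Ici]
        refine ae_of_all _ fun u hu => ?_
        simp only [Set.mem_Ici] at hu
        calc ‖S u (G (r (t - u)))‖ ≤ ‖S u‖ * ‖G (r (t - u))‖ := (S u).le_opNorm _
          _ ≤ Real.exp (-ω * u) * (η * B + C₀) := by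
              apply mul_le_mul (hS _ hu) _ (norm_nonneg _) (Real.exp_nonneg _)
              calc ‖G (r (t - u))‖ ≤ η * ‖r (t - u)‖ + C₀ := hGnorm _
                _ ≤ η * B + C₀ := by nlinarith [hrB (t - u)]
      · exact (expIntOn hω).mul_const _
      · refine ae_of_all _ fun u => ?_
        exact (((S u).continuous.comp (hGc.comp
          (hrc.comp (continuous_id.sub continuous_const)))).continuousAt)
    · intro t
      calc ‖∫ s in Set.Iic t, S (t - s) (G (r s))‖
          ≤ ∫ s in Set.Iic t, Real.exp (-ω * (t - s)) * (η * B + C₀) := by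
            refine MeasureTheory.norm_integral_le_of_norm_le (hexpC _ t) ?_
            rw [ae_restrict_iff' measurableSet_Iic]
            exact ae_of_all _ (hbd t)
        _ = (η * B + C₀) / ω := hexpCval _ t
  -- the fixed point map
  let T : (ℝ →ᵇ H) → (ℝ →ᵇ H) := fun r =>
    BoundedContinuousFunction.ofNormedAddCommGroup
      (fun t => (∫ s in Set.Iic t, S (t - s) (G (r s))) + φ t)
      ((main r r.continuous ‖r‖ r.norm_coe_le_norm).2.1.add hφc)
      ((η * ‖r‖ + C₀) / ω + M)
      (fun t => (norm_add_le _ _).trans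
        (add_le_add ((main r r.continuous ‖r‖ r.norm_coe_le_norm).2.2 t) (hM t)))
  have hTapp : ∀ (r : ℝ →ᵇ H) (t : ℝ),
      T r t = (∫ s in Set.Iic t, S (t - s) (G (r s))) + φ t := fun r t => rfl
  have hcontr : ContractingWith (Real.toNNReal (η / ω)) T := by
    constructor
    · exact_mod_cast Real.toNNReal_lt_one.2 ((div_lt_one hω).2 hωη)
    · apply LipschitzWith.of_dist_le_mul
      intro r₁ r₂
      rw [Real.coe_toNNReal _ (div_nonneg hη hω.le)]
      have hd0 : 0 ≤ dist r₁ r₂ := dist_nonneg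
      refine (BoundedContinuousFunction.dist_le (by positivity)).2 fun t => ?_
      rw [dist_eq_norm, hTapp, hTapp]
      have hi₁ := (main r₁ r₁.continuous ‖r₁‖ r₁.norm_coe_le_norm).1 t
      have hi₂ := (main r₂ r₂.continuous ‖r₂‖ r₂.norm_coe_le_norm).1 t
      have : (∫ s in Set.Iic t, S (t - s) (G (r₁ s))) + φ t
          - ((∫ s in Set.Iic t, S (t - s) (G (r₂ s))) + φ t)
          = ∫ s in Set.Iic t, (S (t - s) (G (r₁ s)) - S (t - s) (G (r₂ s))) := by
        rw [MeasureTheory.integral_sub hi₁ hi₂]; abel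
      rw [this]
      calc ‖∫ s in Set.Iic t, (S (t - s) (G (r₁ s)) - S (t - s) (G (r₂ s)))‖
          ≤ ∫ s in Set.Iic t, Real.exp (-ω * (t - s)) * (η * dist r₁ r₂) := by
            refine MeasureTheory.norm_integral_le_of_norm_le (hexpC _ t) ?_
            rw [ae_restrict_iff' measurableSet_Iic]
            refine ae_of_all _ fun s hs => ?_
            simp only [Set.mem_Iic] at hs
            rw [← map_sub]
            calc ‖S (t - s) (G (r₁ s) - G (r₂ s))‖
                ≤ ‖S (t - s)‖ * ‖G (r₁ s) - G (r₂ s)‖ := (S (t-s)).le_opNorm _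
              _ ≤ Real.exp (-ω * (t - s)) * (η * dist r₁ r₂) := by
                  apply mul_le_mul (hS _ (by linarith)) _ (norm_nonneg _) (Real.exp_nonneg _)
                  calc ‖G (r₁ s) - G (r₂ s)‖ ≤ η * ‖r₁ s - r₂ s‖ := hGlip _ _
                    _ ≤ η * dist r₁ r₂ := by
                        have := r₁.dist_coe_le_dist (g := r₂) s
                        rw [dist_eq_norm] at this
                        nlinarith
        _ = (η * dist r₁ r₂) / ω := hexpCval _ t
        _ = η / ω * dist r₁ r₂ := by ring
  let rfix : ℝ →ᵇ H := ContractingWith.fixedPoint T hcontr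
  have hfix : T rfix = rfix := hcontr.fixedPoint_isFixedPt
  refine ⟨⇑rfix, ⟨rfix.continuous, ⟨‖rfix‖, rfix.norm_coe_le_norm⟩, fun t => ?_⟩, ?_⟩
  · refine ⟨(main rfix rfix.continuous ‖rfix‖ rfix.norm_coe_le_norm).1 t, ?_⟩
    conv_lhs => rw [← hfix]
    exact hTapp rfix t
  · rintro r' ⟨hc', ⟨B, hB⟩, heq⟩
    let r'b : ℝ →ᵇ H := BoundedContinuousFunction.ofNormedAddCommGroup r' hc' B hB
    have hfp : Function.IsFixedPt T r'b := by
      apply BoundedContinuousFunction.ext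
      intro t
      rw [hTapp]
      exact ((heq t).2).symm
    have huniq : r'b = rfix := hcontr.fixedPoint_unique hfp
    calc r' = ⇑r'b := rfl
      _ = ⇑rfix := by rw [huniq]
end
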